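/- Let g be a GHK on (0,∞)^k with homogeneity exponent α ∈ (-(k+1)/2, -k/2), and fix t > 0. Then for Lebesgue-almost every x = (x₁,…,x_k) ∈ ℝ^k one has ∫_0^t |g(s-x₁,…,s-x_k)|·1_{{s > x₁,…,s > x_k}} ds < ∞, and the function h_t(x) := ∫_0^t g(s-x₁,…,s-x_k)·1_{{s > x₁,…,s > x_k}} ds belongs to L²(ℝ^k). -/

import Mathlib

open MeasureTheory

/-- The open positive orthant in `ℝ^k`. -/
def posOrthant (k : ℕ) : Set (Fin k → ℝ) := {y | ∀ i, 0 < y i}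

/-- A measurable function `g : (0,∞)^k → ℝ` is a generalized Hermite kernel (GHK) with
homogeneity exponent `α ∈ (-(k+1)/2, -k/2)` if it is homogeneous of degree `α` on the
positive orthant and `∫_{(0,∞)^k} |g(𝟏+x) g(x)| dx < ∞`. -/
def IsGHK (k : ℕ) (α : ℝ) (g : (Fin k → ℝ) → ℝ) : Prop :=
  Measurable g ∧
  (-((k : ℝ) + 1)/2 < α ∧ α < -(k : ℝ)/2) ∧
  (∀ lam : ℝ, 0 < lam → ∀ x ∈ posOrthant k, g (fun i => lam * x i) = lam ^ α * g x) ∧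
  IntegrableOn (fun x => g (fun i => 1 + x i) * g x) (posOrthant k)

open Set
noncomputable def psi {k : ℕ} (g : (Fin k → ℝ) → ℝ) (s : ℝ) (x : Fin k → ℝ) : ENNReal :=
  Set.indicator {x : Fin k → ℝ | ∀ i, x i < s} (fun x => (‖g (fun i => s - x i)‖₊ : ENNReal)) x

noncomputable def Cval {k : ℕ} (g : (Fin k → ℝ) → ℝ) : ENNReal :=
  ∫⁻ z, (posOrthant k).indicator (fun z => ((‖g (fun i => 1 + z i)‖₊ : ENNReal) * ‖g z‖₊)) z

lemma posOrthant_meas (k : ℕ) : MeasurableSet (posOrthant k) := by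
  have : posOrthant k = ⋂ i, {y : Fin k → ℝ | 0 < y i} := by ext y; simp [posOrthant]
  rw [this]
  exact MeasurableSet.iInter fun i => measurableSet_lt measurable_const (measurable_pi_apply i)

lemma psi_meas {k : ℕ} {g : (Fin k → ℝ) → ℝ} (hgm : Measurable g) :
    Measurable (fun p : ℝ × (Fin k → ℝ) => psi g p.1 p.2) := by
  have : (fun p : ℝ × (Fin k → ℝ) => psi g p.1 p.2)
      = Set.indicator {p : ℝ × (Fin k → ℝ) | ∀ i, p.2 i < p.1}
        (fun p => (‖g (fun i => p.1 - p.2 i)‖₊ : ENNReal)) := by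
    funext p
    by_cases h : ∀ i, p.2 i < p.1 <;> simp [psi, Set.indicator_apply, h]
  rw [this]
  apply Measurable.indicator
  · exact (hgm.comp (measurable_pi_lambda _ fun i =>
      measurable_fst.sub ((measurable_pi_apply i).comp measurable_snd))).enorm
  · have : {p : ℝ × (Fin k → ℝ) | ∀ i, p.2 i < p.1} = ⋂ i, {p : ℝ × (Fin k → ℝ) | p.2 i < p.1} := by
      ext p; simp
    rw [this]
    exact MeasurableSet.iInter fun i =>
      measurableSet_lt (measurable_snd.eval) measurable_fst

lemma scaling {k : ℕ} (F : (Fin k → ℝ) → ENNReal) (hF : Measurable F) {r : ℝ} (hr : 0 < r) :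
    ∫⁻ y, F y = ENNReal.ofReal (r ^ k) * ∫⁻ z, F (r • z) := by
  have h1 : Measure.map (r • ·) (volume : Measure (Fin k → ℝ))
      = ENNReal.ofReal (|(r ^ Module.finrank ℝ (Fin k → ℝ))⁻¹|) • volume :=
    Measure.map_addHaar_smul volume hr.ne'
  have h2 : ∫⁻ z, F (r • z) = ∫⁻ y, F y ∂(Measure.map (r • ·) (volume : Measure (Fin k → ℝ))) := by
    rw [lintegral_map hF (measurable_const_smul r)]
  rw [h2, h1, lintegral_smul_measure]
  have hk : Module.finrank ℝ (Fin k → ℝ) = k := by simp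
  rw [hk, abs_of_pos (by positivity), smul_eq_mul, ← mul_assoc,
    ← ENNReal.ofReal_mul (by positivity), mul_inv_cancel₀ (by positivity), ENNReal.ofReal_one, one_mul]

lemma keyJ {k : ℕ} {α : ℝ} {g : (Fin k → ℝ) → ℝ} (hgm : Measurable g)
    (hhom : ∀ lam : ℝ, 0 < lam → ∀ x ∈ posOrthant k, g (fun i => lam * x i) = lam ^ α * g x)
    {s u : ℝ} (hsu : s < u) :
    ∫⁻ x, psi g s x * psi g u x = ENNReal.ofReal ((u - s) ^ (2 * α + k)) * Cval g := by
  set r := u - s with hrdef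
  have hr : 0 < r := sub_pos.mpr hsu
  -- Step 1: pointwise, psi g s x * psi g u x = indicator of {x < s𝟏}
  have step1 : ∀ x, psi g s x * psi g u x
      = Set.indicator {x : Fin k → ℝ | ∀ i, x i < s}
          (fun x => (‖g (fun i => s - x i)‖₊ : ENNReal) * ‖g (fun i => u - x i)‖₊) x := by
    intro x
    by_cases h : ∀ i, x i < s
    · have h' : ∀ i, x i < u := fun i => (h i).trans hsu
      simp [psi, Set.indicator_apply, h, h']
    · simp [psi, Set.indicator_apply, h]
  rw [lintegral_congr step1, lintegral_indicator (by
    have : {x : Fin k → ℝ | ∀ i, x i < s} = ⋂ i, {x : Fin k → ℝ | x i < s} := by ext x; simp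
    rw [this]
    exact MeasurableSet.iInter fun i => measurableSet_lt (measurable_pi_apply i) measurable_const) _]
  -- Step 2: substitute x = s𝟏 - y
  have mp : MeasurePreserving (fun y : Fin k → ℝ => (fun _ => s) - y) volume volume :=
    Measure.measurePreserving_sub_left volume _
  have emb : MeasurableEmbedding (fun y : Fin k → ℝ => (fun _ => s) - y) :=
    (MeasurableEquiv.subLeft _).measurableEmbedding
  have step2 := mp.setLIntegral_comp_preimage_emb emb
    (fun x => (‖g (fun i => s - x i)‖₊ : ENNReal) * ‖g (fun i => u - x i)‖₊)
    {x : Fin k → ℝ | ∀ i, x i < s}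
  have hpre : (fun y : Fin k → ℝ => (fun _ => s) - y) ⁻¹' {x : Fin k → ℝ | ∀ i, x i < s}
      = posOrthant k := by
    ext y
    simp only [Set.mem_preimage, Set.mem_setOf_eq, Pi.sub_apply, posOrthant]
    constructor
    · intro h i; linarith [h i]
    · intro h i; have := h i; linarith
  rw [← step2, hpre]
  -- simplify the integrand after substitution
  have step3 : ∀ y : Fin k → ℝ,
      (‖g (fun i => s - ((fun _ : Fin k => s) - y : Fin k → ℝ) i)‖₊ : ENNReal)
        * ‖g (fun i => u - ((fun _ : Fin k => s) - y : Fin k → ℝ) i)‖₊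
      = (‖g y‖₊ : ENNReal) * ‖g (fun i => r + y i)‖₊ := by
    intro y
    have e1 : (fun i => s - ((fun _ : Fin k => s) - y) i) = y := by funext i; simp
    have e2 : (fun i => u - ((fun _ : Fin k => s) - y) i) = fun i => r + y i := by
      funext i; simp [hrdef]; ring
    rw [e1, e2]
  simp only [step3]
  -- Step 3: indicator form then scaling
  rw [← lintegral_indicator (posOrthant_meas k) _]
  have hFmeas : Measurable ((posOrthant k).indicator
      (fun y => (‖g y‖₊ : ENNReal) * ‖g (fun i => r + y i)‖₊)) := by
    apply Measurable.indicator _ (posOrthant_meas k)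
    exact hgm.enorm.mul ((hgm.comp (measurable_pi_lambda _ fun i =>
      measurable_const.add (measurable_pi_apply i))).enorm)
  rw [scaling _ hFmeas hr]
  -- Step 4: evaluate the integrand at r • z via homogeneity
  have step4 : ∀ z : Fin k → ℝ,
      (posOrthant k).indicator (fun y => (‖g y‖₊ : ENNReal) * ‖g (fun i => r + y i)‖₊) (r • z)
      = ENNReal.ofReal (r ^ α) * ENNReal.ofReal (r ^ α) *
        (posOrthant k).indicator (fun z => ((‖g (fun i => 1 + z i)‖₊ : ENNReal) * ‖g z‖₊)) z := by
    intro z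
    by_cases hz : z ∈ posOrthant k
    · have hrz : r • z ∈ posOrthant k := fun i => by
        have := hz i; simp only [Pi.smul_apply, smul_eq_mul]; positivity
      have h1z : (fun i => 1 + z i) ∈ posOrthant k := fun i => by have := hz i; positivity
      have e1 : g (r • z) = r ^ α * g z := by
        have := hhom r hr z hz
        convert this using 2
        rfl
      have e2 : (fun i => r + (r • z) i) = fun i => r * (1 + z i) := by
        funext i; simp [mul_add]
      have e3 : g (fun i => r + (r • z) i) = r ^ α * g (fun i => 1 + z i) := by
        rw [e2]; exact hhom r hr _ h1z
      rw [Set.indicator_of_mem hrz, Set.indicator_of_mem hz, e1, e3]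
      have hnn : ∀ a : ℝ, (‖r ^ α * a‖₊ : ENNReal) = ENNReal.ofReal (r ^ α) * ‖a‖₊ := by
        intro a
        rw [nnnorm_mul, ENNReal.coe_mul, ← enorm_eq_nnnorm (r ^ α), Real.enorm_eq_ofReal (Real.rpow_nonneg hr.le α)]
      rw [hnn, hnn]
      ring
    · have hrz : r • z ∉ posOrthant k := by
        intro hmem
        exact hz (fun i => by
          have := hmem i
          simp only [Pi.smul_apply, smul_eq_mul] at this
          nlinarith)
      rw [Set.indicator_of_notMem hrz, Set.indicator_of_notMem hz, mul_zero]
  simp only [step4]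
  rw [lintegral_const_mul _ (by
    exact Measurable.indicator ((hgm.comp (measurable_pi_lambda _ fun i =>
      measurable_const.add (measurable_pi_apply i))).enorm.mul hgm.enorm) (posOrthant_meas k))]
  rw [← Cval, ← mul_assoc]
  congr 1
  rw [← ENNReal.ofReal_mul (by positivity), ← ENNReal.ofReal_mul (by positivity)]
  congr 1
  rw [← Real.rpow_natCast r k, ← Real.rpow_add hr, ← Real.rpow_add hr]
  congr 1
  ring

lemma Cval_lt_top {k : ℕ} {g : (Fin k → ℝ) → ℝ}
    (hint : IntegrableOn (fun x => g (fun i => 1 + x i) * g x) (posOrthant k)) :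
    Cval g < ⊤ := by
  have h := hint.2
  rw [HasFiniteIntegral] at h
  have : Cval g = ∫⁻ x in posOrthant k, (‖g (fun i => 1 + x i) * g x‖₊ : ENNReal) := by
    rw [Cval, lintegral_indicator (posOrthant_meas k)]
    congr 1
    funext x
    rw [nnnorm_mul, ENNReal.coe_mul]
  rwa [this]

lemma K_lt_top {t β : ℝ} (ht : 0 < t) (hβ1 : -1 < β) (hβ2 : β < 0) :
    ∫⁻ v in Set.Ioo (-t) t, ENNReal.ofReal (|v| ^ β) < ⊤ := by
  have hIoo : IntegrableOn (fun v : ℝ => v ^ β) (Set.Ioo 0 t) volume :=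
    (intervalIntegral.integrableOn_Ioo_rpow_iff ht).mpr hβ1
  have hpos : ∫⁻ v in Set.Ioo (0:ℝ) t, ENNReal.ofReal (|v| ^ β) < ⊤ := by
    have heq : ∫⁻ v in Set.Ioo (0:ℝ) t, ENNReal.ofReal (|v| ^ β)
        = ∫⁻ v in Set.Ioo (0:ℝ) t, (‖v ^ β‖₊ : ENNReal) := by
      apply setLIntegral_congr_fun measurableSet_Ioo
      intro v hv; dsimp only
      rw [abs_of_pos hv.1, ← enorm_eq_nnnorm, Real.enorm_eq_ofReal (Real.rpow_nonneg hv.1.le β)]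
    rw [heq]
    exact hIoo.2
  have hsplit : Set.Ioo (-t) t ⊆ Set.Ioo (-t) 0 ∪ Set.Ico 0 t := by
    intro v hv
    rcases lt_or_ge v 0 with h | h
    · exact Or.inl ⟨hv.1, h⟩
    · exact Or.inr ⟨h, hv.2⟩
  calc ∫⁻ v in Set.Ioo (-t) t, ENNReal.ofReal (|v| ^ β)
      ≤ ∫⁻ v in Set.Ioo (-t) 0 ∪ Set.Ico 0 t, ENNReal.ofReal (|v| ^ β) :=
        lintegral_mono_set hsplit
    _ ≤ (∫⁻ v in Set.Ioo (-t) 0, ENNReal.ofReal (|v| ^ β))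
        + ∫⁻ v in Set.Ico 0 t, ENNReal.ofReal (|v| ^ β) := lintegral_union_le _ _ _
    _ < ⊤ := by
        apply ENNReal.add_lt_top.mpr
        constructor
        · -- reflect
          have mp : MeasurePreserving (fun v : ℝ => -v) volume volume :=
            Measure.measurePreserving_neg volume
          have emb : MeasurableEmbedding (fun v : ℝ => -v) :=
            (Homeomorph.neg ℝ).measurableEmbedding
          have h2 := mp.setLIntegral_comp_preimage_emb emb
            (fun v => ENNReal.ofReal (|v| ^ β)) (Set.Ioo (-t) 0)
          have hpre : (fun v : ℝ => -v) ⁻¹' Set.Ioo (-t) 0 = Set.Ioo 0 t := by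
            ext v; simp only [Set.mem_preimage, Set.mem_Ioo]; constructor <;> intro h <;>
              constructor <;> linarith [h.1, h.2]
          rw [← h2, hpre]
          simpa only [abs_neg] using hpos
        · have hre : (volume : Measure ℝ).restrict (Set.Ico (0:ℝ) t)
              = volume.restrict (Set.Ioo 0 t) :=
            (Measure.restrict_congr_set Ioo_ae_eq_Ico).symm
          rw [hre]; exact hpos

lemma inner_bound {t β : ℝ} (ht : 0 < t) {s : ℝ} (hs : s ∈ Set.Ioc 0 t) :
    ∫⁻ u in Set.Ioc 0 t, ENNReal.ofReal (|u - s| ^ β)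
      ≤ ∫⁻ v in Set.Ioo (-t) t, ENNReal.ofReal (|v| ^ β) := by
  have hsub : Set.Ioc (0:ℝ) t ⊆ Set.Ioo (s - t) (s + t) := by
    intro u hu
    constructor
    · linarith [hu.1, hs.2]
    · linarith [hu.2, hs.1]
  calc ∫⁻ u in Set.Ioc 0 t, ENNReal.ofReal (|u - s| ^ β)
      ≤ ∫⁻ u in Set.Ioo (s - t) (s + t), ENNReal.ofReal (|u - s| ^ β) :=
        lintegral_mono_set hsub
    _ = ∫⁻ v in Set.Ioo (-t) t, ENNReal.ofReal (|v| ^ β) := by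
        have mp : MeasurePreserving (fun v : ℝ => v + s) volume volume :=
          measurePreserving_add_right volume s
        have emb : MeasurableEmbedding (fun v : ℝ => v + s) :=
          (Homeomorph.addRight s).measurableEmbedding
        have h2 := mp.setLIntegral_comp_preimage_emb emb
          (fun u => ENNReal.ofReal (|u - s| ^ β)) (Set.Ioo (s - t) (s + t))
        have hpre : (fun v : ℝ => v + s) ⁻¹' Set.Ioo (s - t) (s + t) = Set.Ioo (-t) t := by
          ext v; simp only [Set.mem_preimage, Set.mem_Ioo]; constructor <;> intro h <;>
            constructor <;> linarith [h.1, h.2]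
        rw [← h2, hpre]
        apply lintegral_congr
        intro v
        congr 2
        ring

/-- If `g` is a GHK on `(0,∞)^k` and `t > 0`, then for a.e. `x ∈ ℝ^k` the integral
`∫_0^t |g(s𝟏-x)| 1_{s𝟏>x} ds` is finite, and `h_t(x) = ∫_0^t g(s𝟏-x) 1_{s𝟏>x} ds`
belongs to `L²(ℝ^k)`. -/
theorem stmt_16 (k : ℕ) (α : ℝ) (g : (Fin k → ℝ) → ℝ) (hg : IsGHK k α g)
    (t : ℝ) (ht : 0 < t) :
    (∀ᵐ x : Fin k → ℝ,
      IntegrableOn (fun s : ℝ =>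
        Set.indicator {s : ℝ | ∀ i, x i < s} (fun s => |g (fun i => s - x i)|) s)
        (Set.Ioc 0 t)) ∧
    MemLp (fun x : Fin k → ℝ =>
        ∫ s in Set.Ioc (0 : ℝ) t,
          Set.indicator {s : ℝ | ∀ i, x i < s} (fun s => g (fun i => s - x i)) s)
      2 volume := by
  obtain ⟨hgm, ⟨hα1, hα2⟩, hhom, hint⟩ := hg
  set β : ℝ := 2 * α + k with hβdef
  have hβ1 : -1 < β := by rw [hβdef]; push_cast at hα1 ⊢; linarith
  have hβ2 : β < 0 := by rw [hβdef]; push_cast at hα2 ⊢; linarith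
  set I : Set ℝ := Set.Ioc 0 t with hIdef
  have hψ : Measurable (fun p : ℝ × (Fin k → ℝ) => psi g p.1 p.2) := psi_meas hgm
  set Φ : (Fin k → ℝ) → ENNReal := fun x => ∫⁻ s in I, psi g s x with hΦdef
  have hΦm : Measurable Φ :=
    Measurable.lintegral_prod_right' (hψ.comp measurable_swap)
  set K : ENNReal := ∫⁻ v in Set.Ioo (-t) t, ENNReal.ofReal (|v| ^ β) with hKdef
  have hK : K < ⊤ := K_lt_top ht hβ1 hβ2
  have hC : Cval g < ⊤ := Cval_lt_top hint
  -- J and its value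
  set J : ℝ → ℝ → ENNReal := fun s u => ∫⁻ x, psi g s x * psi g u x with hJdef
  have hJval : ∀ s u : ℝ, s ≠ u → J s u = ENNReal.ofReal (|u - s| ^ β) * Cval g := by
    intro s u h
    rcases h.lt_or_gt with h | h
    · rw [abs_of_pos (sub_pos.mpr h)]
      exact keyJ hgm hhom h
    · have : J s u = J u s := by
        simp only [hJdef]
        exact lintegral_congr fun x => mul_comm _ _
      rw [this, show |u - s| = s - u by rw [abs_sub_comm]; exact abs_of_pos (sub_pos.mpr h)]
      exact keyJ hgm hhom h
  -- main finiteness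
  have hmain : ∫⁻ x, Φ x ^ 2 < ⊤ := by
    have stepA : ∀ x, Φ x ^ 2 = ∫⁻ s in I, ∫⁻ u in I, psi g s x * psi g u x := by
      intro x
      have hsm : Measurable fun s => psi g s x :=
        hψ.comp (measurable_id.prodMk measurable_const)
      rw [pow_two]
      calc Φ x * Φ x = ∫⁻ s in I, psi g s x * Φ x := (lintegral_mul_const _ hsm).symm
        _ = ∫⁻ s in I, ∫⁻ u in I, psi g s x * psi g u x :=
          lintegral_congr fun s => (lintegral_const_mul _ hsm).symm
    have hGm : Measurable fun q : ((Fin k → ℝ) × ℝ) × ℝ => psi g q.1.2 q.1.1 * psi g q.2 q.1.1 := by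
      apply Measurable.mul
      · exact hψ.comp ((measurable_snd.comp measurable_fst).prodMk
          (measurable_fst.comp measurable_fst))
      · exact hψ.comp (measurable_snd.prodMk (measurable_fst.comp measurable_fst))
    have swap1 : ∫⁻ x, ∫⁻ s in I, ∫⁻ u in I, psi g s x * psi g u x
        = ∫⁻ s in I, ∫⁻ x, ∫⁻ u in I, psi g s x * psi g u x := by
      apply lintegral_lintegral_swap
      exact (Measurable.lintegral_prod_right' hGm).aemeasurable
    have swap2 : ∀ s : ℝ, ∫⁻ x, ∫⁻ u in I, psi g s x * psi g u x
        = ∫⁻ u in I, J s u := by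
      intro s
      apply lintegral_lintegral_swap
      apply Measurable.aemeasurable
      apply Measurable.mul
      · exact hψ.comp (measurable_const.prodMk measurable_fst)
      · exact hψ.comp (measurable_snd.prodMk measurable_fst)
    have hJae : ∀ s : ℝ, ∫⁻ u in I, J s u
        = ∫⁻ u in I, ENNReal.ofReal (|u - s| ^ β) * Cval g := by
      intro s
      apply lintegral_congr_ae
      have hae : ∀ᵐ u ∂(volume.restrict I), s ≠ u := by
        rw [ae_iff]
        have hset : {u : ℝ | ¬ s ≠ u} = {s} := by ext u; simp [eq_comm]
        rw [hset]
        exact le_antisymm (le_trans (Measure.le_iff'.mp Measure.restrict_le_self {s})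
          (by simp)) zero_le
      filter_upwards [hae] with u hu
      exact hJval s u hu
    calc ∫⁻ x, Φ x ^ 2
        = ∫⁻ x, ∫⁻ s in I, ∫⁻ u in I, psi g s x * psi g u x := lintegral_congr stepA
      _ = ∫⁻ s in I, ∫⁻ u in I, J s u := by
          rw [swap1]; exact lintegral_congr fun s => swap2 s
      _ = ∫⁻ s in I, (∫⁻ u in I, ENNReal.ofReal (|u - s| ^ β)) * Cval g := by
          apply lintegral_congr fun s => ?_
          rw [hJae s]
          exact lintegral_mul_const _ (by fun_prop)
      _ ≤ ∫⁻ _ in I, K * Cval g := by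
          apply setLIntegral_mono measurable_const
          intro s hs
          exact mul_le_mul_left (inner_bound ht hs) (Cval g)
      _ = K * Cval g * volume I := by rw [setLIntegral_const]
      _ < ⊤ := ENNReal.mul_lt_top (ENNReal.mul_lt_top hK hC)
          (by rw [hIdef, Real.volume_Ioc]; exact ENNReal.ofReal_lt_top)
  constructor
  · -- Part 1
    have hae : ∀ᵐ x : Fin k → ℝ, Φ x < ⊤ := by
      filter_upwards [ae_lt_top (hΦm.pow_const 2) hmain.ne] with x hx
      by_contra h
      rw [not_lt, top_le_iff] at h
      rw [h, pow_two, ENNReal.top_mul_top] at hx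
      exact lt_irrefl _ hx
    filter_upwards [hae] with x hx
    constructor
    · apply Measurable.aestronglyMeasurable
      have hS : MeasurableSet {s : ℝ | ∀ i, x i < s} := by
        have : {s : ℝ | ∀ i, x i < s} = ⋂ i, Set.Ioi (x i) := by ext s; simp
        rw [this]; exact MeasurableSet.iInter fun i => measurableSet_Ioi
      exact Measurable.indicator
        ((hgm.comp (measurable_pi_lambda _ fun i => measurable_id.sub measurable_const)).abs) hS
    · rw [HasFiniteIntegral]
      have heq : ∀ s : ℝ, (‖Set.indicator {s : ℝ | ∀ i, x i < s}
          (fun s => |g (fun i => s - x i)|) s‖₊ : ENNReal) = psi g s x := by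
        intro s
        by_cases h : ∀ i, x i < s <;> simp [psi, Set.indicator_apply, h, Real.nnnorm_abs]
      rw [lintegral_congr (fun s => (enorm_eq_nnnorm _).trans (heq s))]
      exact hx
  · -- Part 2
    constructor
    · have hFj : StronglyMeasurable fun p : (Fin k → ℝ) × ℝ =>
          Set.indicator {p : (Fin k → ℝ) × ℝ | ∀ i, p.1 i < p.2}
            (fun p => g (fun i => p.2 - p.1 i)) p := by
        apply Measurable.stronglyMeasurable
        apply Measurable.indicator
        · exact hgm.comp (measurable_pi_lambda _ fun i =>
            measurable_snd.sub (measurable_fst.eval))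
        · have : {p : (Fin k → ℝ) × ℝ | ∀ i, p.1 i < p.2}
              = ⋂ i, {p : (Fin k → ℝ) × ℝ | p.1 i < p.2} := by ext p; simp
          rw [this]
          exact MeasurableSet.iInter fun i => measurableSet_lt (measurable_fst.eval) measurable_snd
      have := (hFj.integral_prod_right' (ν := volume.restrict I)).aestronglyMeasurable
        (μ := (volume : Measure (Fin k → ℝ)))
      apply this.congr
      filter_upwards with x
      apply integral_congr_ae
      filter_upwards with s
      by_cases h : ∀ i, x i < s <;> simp [Set.indicator_apply, h]
    · rw [eLpNorm_eq_lintegral_rpow_enorm_toReal two_ne_zero ENNReal.ofNat_ne_top]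
      simp only [ENNReal.toReal_ofNat]
      apply ENNReal.rpow_lt_top_of_nonneg (by norm_num)
      apply ne_of_lt
      have hpt : ∀ x : Fin k → ℝ, (‖∫ s in I, Set.indicator {s : ℝ | ∀ i, x i < s}
          (fun s => g (fun i => s - x i)) s‖₊ : ENNReal) ≤ Φ x := by
        intro x
        refine le_trans (enorm_integral_le_lintegral_enorm _) (le_of_eq ?_)
        apply lintegral_congr
        intro s
        by_cases h : ∀ i, x i < s <;> simp [psi, Set.indicator_apply, h, enorm_eq_nnnorm]
      calc ∫⁻ x, (‖∫ s in I, Set.indicator {s : ℝ | ∀ i, x i < s}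
            (fun s => g (fun i => s - x i)) s‖₊ : ENNReal) ^ (2:ℝ)
          ≤ ∫⁻ x, Φ x ^ (2:ℝ) :=
            lintegral_mono fun x => ENNReal.rpow_le_rpow (hpt x) (by norm_num)
        _ = ∫⁻ x, Φ x ^ 2 := by
            apply lintegral_congr fun x => ?_
            rw [show (2:ℝ) = ((2:ℕ):ℝ) by norm_num, ENNReal.rpow_natCast]
        _ < ⊤ := hmain
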